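/- In the braid word w_A constructed from adjacency matrix A, for each pair i < j the crossings between strand i and strand j consist of exactly one positive crossing σ and one crossing with sign ε_{i,j}; hence the linking number of components i and j of the trace closure equals (1 + ε_{i,j})/2, which equals A_{i,j}. Therefore lk(L_A) = A. -/

import Mathlib

open Finset

/-- A braid letter `σ_i^ε` on `n+1` strands. -/
abbrev BraidLetter (n : ℕ) := Fin n × Bool

/-- The adjacent transposition corresponding to a braid letter. -/
def braidLetterPerm {n : ℕ} (l : BraidLetter n) : Equiv.Perm (Fin (n + 1)) :=
  Equiv.swap l.1.castSucc l.1.succ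

/-- The permutation induced by the first `t` letters of a braid word, mapping the
starting position of a strand to its position after `t` letters. -/
def prefixPerm {n : ℕ} (w : List (BraidLetter n)) (t : ℕ) : Equiv.Perm (Fin (n + 1)) :=
  (((w.take t).map braidLetterPerm).reverse).prod

/-- The `t`-th letter `σ_k^ε` of a braid word is a crossing between the two components
occupying strand positions `k` and `k+1` at that point, the components being tracked via
the permutation induced by the prefix of the word. -/
def crossingLabel {n : ℕ} (w : List (BraidLetter n)) (t : Fin w.length) :
    Sym2 (Fin (n + 1)) :=
  s((prefixPerm w t)⁻¹ (w.get t).1.castSucc, (prefixPerm w t)⁻¹ (w.get t).1.succ)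

/-- The sign of the `t`-th crossing of a braid word. -/
def crossingSign {n : ℕ} (w : List (BraidLetter n)) (t : Fin w.length) : ℤ :=
  if (w.get t).2 then 1 else -1

/-- `ε_{i,j} = +1` if `A i j = 1` and `-1` otherwise. -/
def eps {n : ℕ} (A : Matrix (Fin (n + 1)) (Fin (n + 1)) ℤ) (i j : Fin (n + 1)) : ℤ :=
  if A i j = 1 then 1 else -1

/-- The word `w_i = σ_i ⋯ σ_{n-1} σ_{n-1}^{ε_{i,n}} ⋯ σ_i^{ε_{i,i+1}}` built from `A`. -/
def wordW {n : ℕ} (A : Matrix (Fin (n + 1)) (Fin (n + 1)) ℤ) (i : Fin n) :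
    List (BraidLetter n) :=
  (((List.finRange n).drop i.val).map fun g => (g, true)) ++
    ((((List.finRange n).drop i.val).reverse).map fun g =>
      (g, decide (A i.castSucc g.succ = 1)))

/-- The braid word `w_A = w_1 w_2 ⋯ w_{n-1}`. -/
def wordA {n : ℕ} (A : Matrix (Fin (n + 1)) (Fin (n + 1)) ℤ) : List (BraidLetter n) :=
  ((List.finRange n).map (wordW A)).flatten

-- aux
def sgn (b : Bool) : ℤ := if b then 1 else -1

def permOf {n : ℕ} (w : List (BraidLetter n)) : Equiv.Perm (Fin (n + 1)) :=
  ((w.map braidLetterPerm).reverse).prod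

def crossingsList {n : ℕ} (π : Equiv.Perm (Fin (n + 1))) :
    List (BraidLetter n) → List (Sym2 (Fin (n + 1)) × ℤ)
  | [] => []
  | l :: w => (s(π⁻¹ l.1.castSucc, π⁻¹ l.1.succ), sgn l.2) ::
      crossingsList (braidLetterPerm l * π) w

lemma permOf_nil {n : ℕ} : permOf ([] : List (BraidLetter n)) = 1 := rfl

lemma permOf_cons {n : ℕ} (l : BraidLetter n) (w : List (BraidLetter n)) :
    permOf (l :: w) = permOf w * braidLetterPerm l := by
  simp [permOf]

lemma permOf_append {n : ℕ} (u v : List (BraidLetter n)) :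
    permOf (u ++ v) = permOf v * permOf u := by
  simp [permOf, mul_comm]

lemma prefixPerm_zero {n : ℕ} (w : List (BraidLetter n)) : prefixPerm w 0 = 1 := rfl

lemma prefixPerm_cons_succ {n : ℕ} (l : BraidLetter n) (w : List (BraidLetter n)) (t : ℕ) :
    prefixPerm (l :: w) (t + 1) = prefixPerm w t * braidLetterPerm l := by
  simp [prefixPerm]

lemma crossingsList_append {n : ℕ} (π : Equiv.Perm (Fin (n + 1)))
    (u v : List (BraidLetter n)) :
    crossingsList π (u ++ v) = crossingsList π u ++ crossingsList (permOf u * π) v := by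
  induction u generalizing π with
  | nil => simp [crossingsList, permOf_nil]
  | cons l u ih => simp [crossingsList, ih, permOf_cons, mul_assoc]

lemma crossingsList_eq_ofFn {n : ℕ} (w : List (BraidLetter n)) (π : Equiv.Perm (Fin (n + 1))) :
    crossingsList π w = List.ofFn
      (fun t : Fin w.length => (Sym2.map ⇑π⁻¹ (crossingLabel w t), crossingSign w t)) := by
  induction w generalizing π with
  | nil => rfl
  | cons l w ih =>
      show _ :: _ = _
      rw [List.ofFn_succ]
      congr 1
      rw [ih]
      congr 1
      funext i
      simp only [crossingLabel, crossingSign, Fin.val_succ, prefixPerm_cons_succ,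
        List.get_cons_succ]
      simp [Sym2.map_pair_eq, mul_inv_rev, Equiv.Perm.mul_apply]

def runWord (n : ℕ) (sf : Fin n → Bool) (k : ℕ) : List (BraidLetter n) :=
  (((List.finRange n).drop k).map fun g => (g, true)) ++
    ((((List.finRange n).drop k).reverse).map fun g => (g, sf g))

lemma mem_drop_finRange {n m : ℕ} {g : Fin n} (h : g ∈ (List.finRange n).drop m) :
    m ≤ g.val := by
  obtain ⟨idx, hidx, heq⟩ := List.mem_iff_getElem.1 h
  rw [List.getElem_drop, List.getElem_finRange] at heq
  subst heq
  simp

lemma drop_finRange_cons {n k : ℕ} (hk : k < n) :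
    (List.finRange n).drop k = ⟨k, hk⟩ :: (List.finRange n).drop (k + 1) := by
  rw [List.drop_eq_getElem_cons (by simpa using hk)]
  congr 1
  simp [List.getElem_finRange]

lemma run_main (n : ℕ) (sf : Fin n → Bool) :
    ∀ d k (h : k + d = n),
      permOf (runWord n sf k) = 1 ∧
      ∀ π : Equiv.Perm (Fin (n + 1)),
        crossingsList π (runWord n sf k) =
          (((List.finRange n).drop k).map fun g =>
            (s(π⁻¹ ⟨k, by omega⟩, π⁻¹ g.succ), (1 : ℤ))) ++
          ((((List.finRange n).drop k).reverse).map fun g =>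
            (s(π⁻¹ ⟨k, by omega⟩, π⁻¹ g.succ), sgn (sf g))) := by
  intro d
  induction d with
  | zero =>
      intro k h
      have hk : (List.finRange n).drop k = [] := by
        apply List.drop_eq_nil_of_le; simp; omega
      constructor
      · simp [runWord, hk, permOf]
      · intro π; simp [runWord, hk, crossingsList]
  | succ d ih =>
      intro k h
      have hk : k < n := by omega
      obtain ⟨iha, ihb⟩ := ih (k + 1) (by omega)
      have hd := drop_finRange_cons hk
      have hrw : runWord n sf k =
          (⟨k, hk⟩, true) :: (runWord n sf (k + 1) ++ [((⟨k, hk⟩ : Fin n), sf ⟨k, hk⟩)]) := by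
        rw [runWord, runWord, hd]
        simp [List.append_assoc]
      have h1 : ∀ π : Equiv.Perm (Fin (n + 1)),
          (braidLetterPerm ((⟨k, hk⟩ : Fin n), true) * π)⁻¹ ⟨k + 1, by omega⟩ =
            π⁻¹ ⟨k, by omega⟩ := by
        intro π
        rw [mul_inv_rev]
        simp only [Equiv.Perm.mul_apply, braidLetterPerm, Equiv.symm_swap, Equiv.swap_inv]
        congr 1
        rw [show (⟨k + 1, by omega⟩ : Fin (n + 1)) = (⟨k, hk⟩ : Fin n).succ from rfl]
        rw [Equiv.swap_apply_right]
        rfl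
      have h2 : ∀ (π : Equiv.Perm (Fin (n + 1))) (g : Fin n), k + 1 ≤ g.val →
          (braidLetterPerm ((⟨k, hk⟩ : Fin n), true) * π)⁻¹ g.succ = π⁻¹ g.succ := by
        intro π g hgv
        rw [mul_inv_rev]
        simp only [Equiv.Perm.mul_apply, braidLetterPerm, Equiv.symm_swap, Equiv.swap_inv]
        congr 1
        apply Equiv.swap_apply_of_ne_of_ne <;>
          (intro hc; have := congrArg Fin.val hc; simp [Fin.val_succ] at this; omega)
      constructor
      · rw [hrw, permOf_cons, permOf_append, iha]
        simp [permOf, braidLetterPerm, Equiv.swap_mul_self]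
      · intro π
        rw [hrw]
        show _ :: _ = _
        rw [crossingsList_append, iha, one_mul, ihb]
        rw [hd]
        simp only [List.map_cons, List.reverse_cons, List.map_append, List.map_cons,
          List.map_nil, List.cons_append]
        congr 1
        rw [List.append_assoc]
        congr 1
        · apply List.map_congr_left
          intro g hg
          have hgv : k + 1 ≤ g.val := mem_drop_finRange hg
          rw [h1 π, h2 π g hgv]
        · congr 1
          · apply List.map_congr_left
            intro g hg
            rw [List.mem_reverse] at hg
            have hgv : k + 1 ≤ g.val := mem_drop_finRange hg
            rw [h1 π, h2 π g hgv]
          · simp only [crossingsList]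
            have h3 : (braidLetterPerm ((⟨k, hk⟩ : Fin n), true) * π)⁻¹
                (⟨k, hk⟩ : Fin n).castSucc = π⁻¹ (⟨k, hk⟩ : Fin n).succ := by
              rw [mul_inv_rev]
              simp only [Equiv.Perm.mul_apply, braidLetterPerm, Equiv.symm_swap, Equiv.swap_inv,
                Equiv.swap_apply_left]
            have h4 : (braidLetterPerm ((⟨k, hk⟩ : Fin n), true) * π)⁻¹
                (⟨k, hk⟩ : Fin n).succ = π⁻¹ ⟨k, by omega⟩ := by
              rw [mul_inv_rev]
              simp only [Equiv.Perm.mul_apply, braidLetterPerm, Equiv.symm_swap, Equiv.swap_inv,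
                Equiv.swap_apply_right]
              rfl
            rw [h3, h4, Sym2.eq_swap]

lemma mem_drop_finRange_iff {n m : ℕ} {g : Fin n} :
    g ∈ (List.finRange n).drop m ↔ m ≤ g.val := by
  constructor
  · exact mem_drop_finRange
  · intro h
    rw [List.mem_iff_getElem]
    have hg := g.isLt
    refine ⟨g.val - m, by simp; omega, ?_⟩
    rw [List.getElem_drop, List.getElem_finRange]
    ext
    simp
    omega

lemma sum_drop_finRange {M : Type*} [AddCommMonoid M] {n : ℕ} (k : ℕ) (f : Fin n → M) :
    (((List.finRange n).drop k).map f).sum =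
      ∑ g ∈ univ.filter (fun g : Fin n => k ≤ g.val), f g := by
  rw [← List.sum_toFinset f ((List.drop_sublist k _).nodup (List.nodup_finRange n))]
  apply Finset.sum_congr _ (fun _ _ => rfl)
  ext g
  simp [List.mem_toFinset, mem_drop_finRange_iff]

lemma crossingsList_flatten {n : ℕ} (π : Equiv.Perm (Fin (n + 1)))
    (L : List (List (BraidLetter n))) (h : ∀ u ∈ L, permOf u = 1) :
    crossingsList π L.flatten = (L.map (crossingsList π)).flatten := by
  induction L generalizing π with
  | nil => rfl
  | cons u L ih =>
      rw [List.flatten_cons, crossingsList_append, h u (by simp), one_mul,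
        List.map_cons, List.flatten_cons, ih _ (fun v hv => h v (by simp [hv]))]

section Main
variable {n : ℕ} (A : Matrix (Fin (n + 1)) (Fin (n + 1)) ℤ)

lemma wordW_eq_runWord (i : Fin n) :
    wordW A i = runWord n (fun g => decide (A i.castSucc g.succ = 1)) i.val := rfl

lemma permOf_wordW (i : Fin n) : permOf (wordW A i) = 1 := by
  rw [wordW_eq_runWord]
  exact (run_main n _ (n - i.val) i.val (by omega)).1

lemma crossings_wordW (i : Fin n) :
    crossingsList 1 (wordW A i) =
      (((List.finRange n).drop i.val).map fun g =>
        (s(i.castSucc, g.succ), (1 : ℤ))) ++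
      ((((List.finRange n).drop i.val).reverse).map fun g =>
        (s(i.castSucc, g.succ), sgn (decide (A i.castSucc g.succ = 1)))) := by
  rw [wordW_eq_runWord]
  rw [(run_main n _ (n - i.val) i.val (by omega)).2 1]
  simp [Fin.castSucc, Fin.castAdd, Fin.castLE]

lemma crossings_wordA :
    crossingsList 1 (wordA A) =
      ((List.finRange n).map fun i => crossingsList 1 (wordW A i)).flatten := by
  rw [wordA, crossingsList_flatten]
  · rw [List.map_map]; rfl
  · intro u hu
    rw [List.mem_map] at hu
    obtain ⟨i, _, rfl⟩ := hu
    exact permOf_wordW A i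

lemma big_sum {M : Type*} [AddCommMonoid M] (i j : Fin (n + 1)) (hij : i < j)
    (u : ℤ → M) :
    ((crossingsList 1 (wordA A)).map
        (fun x => if x.1 = s(i, j) then u x.2 else 0)).sum =
      u 1 + u (eps A i j) := by
  have hlt : i.val < j.val := hij
  have hin : i.val < n := by have := j.isLt; omega
  set i₀ : Fin n := ⟨i.val, hin⟩ with hi₀
  set j₀ : Fin n := ⟨j.val - 1, by have := j.isLt; omega⟩ with hj₀
  have hic : i₀.castSucc = i := by ext; simp [hi₀]
  have hjs : j₀.succ = j := by ext; simp [Fin.val_succ, hj₀]; omega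
  rw [crossings_wordA, List.map_flatten, List.sum_flatten, List.map_map, List.map_map,
    ← Fin.sum_univ_def]
  have piece : ∀ i' : Fin n,
      ((crossingsList 1 (wordW A i')).map
        (fun x => if x.1 = s(i, j) then u x.2 else 0)).sum =
      if i' = i₀ then u 1 + u (eps A i j) else 0 := by
    intro i'
    rw [crossings_wordW]
    simp only [List.map_append, List.sum_append, List.map_reverse, List.sum_reverse,
      List.map_map]
    rw [sum_drop_finRange, sum_drop_finRange]
    simp only [Function.comp_apply]
    have inner : ∀ (v : Fin n → M),
        (∑ g ∈ univ.filter (fun g : Fin n => i'.val ≤ g.val),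
          (if s(i'.castSucc, g.succ) = s(i, j) then v g else 0)) =
        if i' = i₀ then v j₀ else 0 := by
      intro v
      by_cases hii : i' = i₀
      · have hvi : i'.val = i.val := by rw [hii]
        rw [if_pos hii]
        have hcond : ∀ g : Fin n,
            (s(i'.castSucc, g.succ) = s(i, j)) ↔ g = j₀ := by
          intro g
          rw [Sym2.eq_iff]
          constructor
          · rintro (⟨h1, h2⟩ | ⟨h1, h2⟩)
            · have := congrArg Fin.val h2
              simp [Fin.val_succ] at this
              ext
              simp [hj₀]
              omega
            · exfalso
              have := congrArg Fin.val h1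
              simp [Fin.coe_castSucc] at this
              omega
          · rintro rfl
            left
            refine ⟨?_, ?_⟩
            · ext; simp [Fin.coe_castSucc, hvi]
            · ext; simp [Fin.val_succ, hj₀]; omega
        calc (∑ g ∈ univ.filter (fun g : Fin n => i'.val ≤ g.val),
              (if s(i'.castSucc, g.succ) = s(i, j) then v g else 0))
            = ∑ g ∈ univ.filter (fun g : Fin n => i'.val ≤ g.val),
              (if g = j₀ then v g else 0) := by
              apply Finset.sum_congr rfl
              intro g _
              simp only [hcond g]
          _ = if j₀ ∈ univ.filter (fun g : Fin n => i'.val ≤ g.val) then v j₀ else 0 :=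
              Finset.sum_ite_eq' _ _ _
          _ = v j₀ := by
              rw [if_pos]
              simp only [Finset.mem_filter, Finset.mem_univ, true_and]
              show i'.val ≤ j₀.val
              simp [hj₀]
              omega
      · rw [if_neg hii]
        apply Finset.sum_eq_zero
        intro g hg
        rw [Finset.mem_filter] at hg
        rw [if_neg]
        rw [Sym2.eq_iff]
        rintro (⟨h1, h2⟩ | ⟨h1, h2⟩)
        · apply hii
          have := congrArg Fin.val h1
          simp [Fin.coe_castSucc] at this
          ext
          simp [this, hi₀]
        · have hv1 := congrArg Fin.val h1
          have hv2 := congrArg Fin.val h2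
          simp [Fin.val_succ, Fin.coe_castSucc] at hv1 hv2
          have := hg.2
          omega
    rw [inner (fun g => u 1), inner (fun g => u (sgn (decide (A i'.castSucc g.succ = 1))))]
    by_cases hii : i' = i₀
    · rw [if_pos hii, if_pos hii, if_pos hii]
      congr 2
      rw [hii, hic, hjs, eps, sgn]
      by_cases hA : A i j = 1 <;> simp [hA]
    · simp [hii]
  calc (∑ i' : Fin n, ((crossingsList 1 (wordW A i')).map
          (fun x => if x.1 = s(i, j) then u x.2 else 0)).sum)
      = ∑ i' : Fin n, if i' = i₀ then u 1 + u (eps A i j) else 0 :=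
        Finset.sum_congr rfl (fun i' _ => piece i')
    _ = u 1 + u (eps A i j) := by rw [Finset.sum_ite_eq' _ _ _]; simp

end Main


/-- In `w_A`, for each pair `i < j` the crossings between components `i` and `j` consist
of exactly two crossings, of total sign `1 + ε_{i,j}`; hence the linking number of
components `i` and `j` of the trace closure is `(1 + ε_{i,j})/2 = A i j`, i.e.
`lk(L_A) = A`. -/
theorem linkingMatrix_of_wordA {n : ℕ} (A : Matrix (Fin (n + 1)) (Fin (n + 1)) ℤ)
    (hsymm : A.IsSymm) (hdiag : ∀ i, A i i = 0) (h01 : ∀ i j, A i j = 0 ∨ A i j = 1) :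
    (∀ i j : Fin (n + 1), i < j →
      (univ.filter fun t : Fin (wordA A).length =>
        crossingLabel (wordA A) t = s(i, j)).card = 2 ∧
      (∑ t ∈ univ.filter (fun t : Fin (wordA A).length =>
        crossingLabel (wordA A) t = s(i, j)), crossingSign (wordA A) t) = 1 + eps A i j) ∧
    (∀ i j : Fin (n + 1), i ≠ j →
      ((∑ t ∈ univ.filter (fun t : Fin (wordA A).length =>
        crossingLabel (wordA A) t = s(i, j)), crossingSign (wordA A) t : ℤ) : ℚ) / 2 =
        ((1 + eps A i j : ℤ) : ℚ) / 2 ∧ ((1 + eps A i j : ℤ) : ℚ) / 2 = (A i j : ℚ)) := by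
  have h0 : crossingsList (1 : Equiv.Perm (Fin (n + 1))) (wordA A) =
      List.ofFn (fun t => (crossingLabel (wordA A) t, crossingSign (wordA A) t)) := by
    rw [crossingsList_eq_ofFn]
    simp
  have keyC : ∀ i j : Fin (n + 1), i < j →
      (univ.filter fun t : Fin (wordA A).length =>
        crossingLabel (wordA A) t = s(i, j)).card = 2 := by
    intro i j hij
    have hb := big_sum A i j hij (fun _ => (1 : ℕ))
    rw [h0, List.map_ofFn, List.sum_ofFn] at hb
    rw [Finset.card_filter]
    convert hb using 1
    rfl
  have keyS : ∀ i j : Fin (n + 1), i < j →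
      (∑ t ∈ univ.filter (fun t : Fin (wordA A).length =>
        crossingLabel (wordA A) t = s(i, j)), crossingSign (wordA A) t) = 1 + eps A i j := by
    intro i j hij
    have hb := big_sum A i j hij (fun z => z)
    rw [h0, List.map_ofFn, List.sum_ofFn] at hb
    rw [Finset.sum_filter]
    convert hb using 1
    rfl
  have arith : ∀ i j : Fin (n + 1), ((1 + eps A i j : ℤ) : ℚ) / 2 = (A i j : ℚ) := by
    intro i j
    rcases h01 i j with hA | hA <;> rw [eps] <;> simp [hA] <;> norm_num
  refine ⟨fun i j hij => ⟨keyC i j hij, keyS i j hij⟩, fun i j hne => ?_⟩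
  rcases lt_or_gt_of_ne hne with h | h
  · exact ⟨by rw [keyS i j h], arith i j⟩
  · have heps : eps A i j = eps A j i := by rw [eps, eps, hsymm.apply j i]
    refine ⟨?_, arith i j⟩
    simp only [show s(i, j) = s(j, i) from Sym2.eq_swap]
    rw [keyS j i h, heps]
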